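/- Let I ⊆ ℝ be an open interval, let h : I → ℝ be smooth and nowhere zero such that f(x) := −h(x)·(1/h)″(x) is nowhere zero on I, let B : ℝ → ℝ be smooth, and let 𝔅 : ℝ → ℝ be smooth with 𝔅′ = B. Then for every smooth solution u : ℝ × I → ℝ of the equation f(x)u_t = u_{xx} + h(x)B(u)u_x (the case A = 1, f = −h·(h^{−1})_{xx}), the pair F = e^t(1/h)″(x)·u, G = e^t((1/h)(x)·u_x − (1/h)′(x)·u + 𝔅(u)) satisfies the conservation-law identity ∂_t F + ∂_x G = 0 at every point of ℝ × I. -/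

import Mathlib

open Set Real
open scoped ContDiff

/-- For the equation `f(x) u_t = u_xx + h(x) B(u) u_x` with
`f = -h (1/h)''` nowhere zero (the case `A = 1`, `f = -h (h⁻¹)_xx`), the pair
`F = e^t (1/h)''(x) u`, `G = e^t ((1/h)(x) u_x - (1/h)'(x) u + 𝔅(u))` (where `𝔅' = B`)
is a conserved vector. -/
theorem conservation_law_case_A_one
    (I : Set ℝ) (hIopen : IsOpen I) (hIconn : Convex ℝ I)
    (h f : ℝ → ℝ) (hh : ContDiffOn ℝ ∞ h I) (hh0 : ∀ x ∈ I, h x ≠ 0)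
    (hfdef : ∀ x ∈ I, f x = -(h x * deriv (deriv (fun y => (h y)⁻¹)) x))
    (hf0 : ∀ x ∈ I, f x ≠ 0)
    (B FB : ℝ → ℝ) (hB : ContDiff ℝ ∞ B)
    (hFB : ContDiff ℝ ∞ FB) (hFB' : ∀ v : ℝ, HasDerivAt FB (B v) v)
    (u : ℝ → ℝ → ℝ)
    (hu : ContDiffOn ℝ ∞ (fun p : ℝ × ℝ => u p.1 p.2) (univ ×ˢ I))
    (hpde : ∀ t : ℝ, ∀ x ∈ I,
      f x * deriv (fun s => u s x) t
        = deriv (deriv (fun y => u t y)) x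
          + h x * B (u t x) * deriv (fun y => u t y) x) :
    ∀ t : ℝ, ∀ x ∈ I,
      deriv (fun s => Real.exp s * deriv (deriv (fun y => (h y)⁻¹)) x * u s x) t
        + deriv (fun y =>
            Real.exp t * ((h y)⁻¹ * deriv (fun z => u t z) y
              - deriv (fun z => (h z)⁻¹) y * u t y + FB (u t y))) x = 0 := by
  intro t x hx
  have hone : (∞ : WithTop ℕ∞) ≠ 0 := by simp
  have hopen : IsOpen ((univ : Set ℝ) ×ˢ I) := isOpen_univ.prod hIopen
  have hmem : (t, x) ∈ (univ : Set ℝ) ×ˢ I := ⟨mem_univ t, hx⟩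
  have huat : ContDiffAt ℝ ∞ (fun p : ℝ × ℝ => u p.1 p.2) (t, x) :=
    hu.contDiffAt (hopen.mem_nhds hmem)
  -- t-derivative of u
  have hdt : DifferentiableAt ℝ (fun s : ℝ => u s x) t := by
    have : DifferentiableAt ℝ ((fun p : ℝ × ℝ => u p.1 p.2) ∘ (fun s : ℝ => (s, x))) t :=
      (huat.differentiableAt hone).comp t (differentiableAt_id.prodMk (differentiableAt_const x))
    exact this
  have Hut : HasDerivAt (fun s : ℝ => u s x) (deriv (fun s => u s x) t) t := hdt.hasDerivAt
  -- smoothness of x-slices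
  have hwC : ContDiffOn ℝ ∞ (fun y => u t y) I := by
    have : ContDiffOn ℝ ∞ ((fun p : ℝ × ℝ => u p.1 p.2) ∘ (fun y : ℝ => (t, y))) I :=
      hu.comp ((contDiff_const.prodMk contDiff_id).contDiffOn)
        (fun y hy => ⟨mem_univ t, hy⟩)
    exact this
  have hgC : ContDiffOn ℝ ∞ (fun y => (h y)⁻¹) I := hh.inv hh0
  have hdwC : ContDiffOn ℝ ∞ (deriv (fun y => u t y)) I := hwC.deriv_of_isOpen hIopen (by exact_mod_cast le_top)
  have hdgC : ContDiffOn ℝ ∞ (deriv (fun y => (h y)⁻¹)) I := hgC.deriv_of_isOpen hIopen (by exact_mod_cast le_top)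
  have nh := hIopen.mem_nhds hx
  have Hg : HasDerivAt (fun y => (h y)⁻¹) (deriv (fun z => (h z)⁻¹) x) x :=
    ((hgC.contDiffAt nh).differentiableAt hone).hasDerivAt
  have Hdg : HasDerivAt (deriv (fun z => (h z)⁻¹)) (deriv (deriv (fun y => (h y)⁻¹)) x) x :=
    ((hdgC.contDiffAt nh).differentiableAt hone).hasDerivAt
  have Hw : HasDerivAt (fun z => u t z) (deriv (fun z => u t z) x) x :=
    ((hwC.contDiffAt nh).differentiableAt hone).hasDerivAt
  have Hdw : HasDerivAt (deriv (fun z => u t z)) (deriv (deriv (fun y => u t y)) x) x :=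
    ((hdwC.contDiffAt nh).differentiableAt hone).hasDerivAt
  have HFBw : HasDerivAt (fun y => FB (u t y)) (B (u t x) * deriv (fun z => u t z) x) x :=
    (hFB' (u t x)).comp x Hw
  set c := deriv (deriv (fun y => (h y)⁻¹)) x with hc
  -- derivative of F in t
  have HF : HasDerivAt (fun s => Real.exp s * c * u s x)
      ((Real.exp t * c) * u t x + (Real.exp t * c) * deriv (fun s => u s x) t) t :=
    ((Real.hasDerivAt_exp t).mul_const c).mul Hut
  -- derivative of G in x
  have HG : HasDerivAt (fun y =>
      Real.exp t * ((h y)⁻¹ * deriv (fun z => u t z) y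
        - deriv (fun z => (h z)⁻¹) y * u t y + FB (u t y)))
      (Real.exp t *
        ((deriv (fun z => (h z)⁻¹) x * deriv (fun z => u t z) x
            + (h x)⁻¹ * deriv (deriv (fun y => u t y)) x)
          - (c * u t x + deriv (fun z => (h z)⁻¹) x * deriv (fun z => u t z) x)
          + B (u t x) * deriv (fun z => u t z) x)) x :=
    (((Hg.mul Hdw).sub (Hdg.mul Hw)).add HFBw).const_mul (Real.exp t)
  rw [HF.deriv, HG.deriv]
  have hp := hpde t x hx
  rw [hfdef x hx] at hp
  have hx0 := hh0 x hx
  have key : c * deriv (fun s => u s x) t + (h x)⁻¹ * deriv (deriv (fun y => u t y)) x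
      + B (u t x) * deriv (fun z => u t z) x = 0 := by
    have hmul : h x * (c * deriv (fun s => u s x) t
        + (h x)⁻¹ * deriv (deriv (fun y => u t y)) x
        + B (u t x) * deriv (fun z => u t z) x) = h x * 0 := by
      rw [mul_zero]
      field_simp
      linear_combination -hp
    exact mul_left_cancel₀ hx0 hmul
  linear_combination Real.exp t * key
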